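/- Let (X_n) be a martingale difference sequence with conditional variances v_n, partial sums of variances A_n = ∑_{k≤n} v_k, and let g be a positive increasing function on [0,∞) with g(∞) = ∞ and ∫_0^∞ dx/g(x) < ∞. Then almost surely, on the event {A_n → ∞}, we have (∑_{k≤n} X_k)/√(g(A_n)) → 0. -/

import Mathlib

open Filter MeasureTheory

section Aux

lemma aux_sqrt_atTop : Tendsto Real.sqrt atTop atTop :=
  tendsto_atTop_atTop_of_monotone (fun _ _ h => Real.sqrt_le_sqrt h)
    (fun b => ⟨(max b 0) ^ 2, by
      rw [Real.sqrt_sq (le_max_right b 0)]; exact le_max_left b 0⟩)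

lemma aux_weighted (b e : ℕ → ℝ) (hb : ∀ n, 0 < b n) (hmono : Monotone b)
    (htop : Tendsto b atTop atTop) (he : Tendsto e atTop (nhds 0)) :
    Tendsto (fun n => (∑ i ∈ Finset.range n, (b (i + 1) - b i) * e (i + 1)) / b n)
      atTop (nhds 0) := by
  rw [Metric.tendsto_atTop]
  intro ε hε
  obtain ⟨N, hN⟩ := Metric.tendsto_atTop.1 he (ε / 4) (by linarith)
  set C := |∑ i ∈ Finset.range N, (b (i + 1) - b i) * e (i + 1)| with hC
  have hC0 : 0 ≤ C := abs_nonneg _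
  obtain ⟨N₂, hN₂⟩ := Filter.eventually_atTop.1 (htop.eventually_ge_atTop (4 * (C + 1) / ε))
  refine ⟨max N N₂, fun n hn => ?_⟩
  have hNn : N ≤ n := le_trans (le_max_left _ _) hn
  have hN₂n : N₂ ≤ n := le_trans (le_max_right _ _) hn
  have hbn := hb n
  rw [Real.dist_eq, sub_zero]
  have hsplit : ∑ i ∈ Finset.range n, (b (i + 1) - b i) * e (i + 1)
      = (∑ i ∈ Finset.range N, (b (i + 1) - b i) * e (i + 1))
        + ∑ i ∈ Finset.Ico N n, (b (i + 1) - b i) * e (i + 1) :=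
    (Finset.sum_range_add_sum_Ico _ hNn).symm
  have htel : ∀ m : ℕ, ∑ i ∈ Finset.range m, (b (i + 1) - b i) = b m - b 0 :=
    fun m => Finset.sum_range_sub b m
  have htail : |∑ i ∈ Finset.Ico N n, (b (i + 1) - b i) * e (i + 1)|
      ≤ ε / 4 * (b n - b N) := by
    calc |∑ i ∈ Finset.Ico N n, (b (i + 1) - b i) * e (i + 1)|
        ≤ ∑ i ∈ Finset.Ico N n, |(b (i + 1) - b i) * e (i + 1)| :=
          Finset.abs_sum_le_sum_abs _ _
      _ ≤ ∑ i ∈ Finset.Ico N n, (b (i + 1) - b i) * (ε / 4) := by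
          refine Finset.sum_le_sum fun i hi => ?_
          have hd : 0 ≤ b (i + 1) - b i := sub_nonneg.2 (hmono (Nat.le_succ i))
          have hei : |e (i + 1)| ≤ ε / 4 := by
            have := hN (i + 1) (le_trans (Finset.mem_Ico.1 hi).1 (Nat.le_succ i))
            rw [Real.dist_eq, sub_zero] at this
            exact this.le
          rw [abs_mul, abs_of_nonneg hd]
          exact mul_le_mul_of_nonneg_left hei hd
      _ = (b n - b N) * (ε / 4) := by
          rw [← Finset.sum_mul]
          congr 1
          have h1 := Finset.sum_range_add_sum_Ico (fun i => b (i + 1) - b i) hNn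
          have h2 := htel n
          have h3 := htel N
          linarith [h1, h2, h3]
      _ = ε / 4 * (b n - b N) := mul_comm _ _
  have hS : |∑ i ∈ Finset.range n, (b (i + 1) - b i) * e (i + 1)| ≤ C + ε / 4 * b n := by
    rw [hsplit]
    calc |_ + _| ≤ C + |∑ i ∈ Finset.Ico N n, (b (i + 1) - b i) * e (i + 1)| := abs_add_le _ _
      _ ≤ C + ε / 4 * (b n - b N) := by linarith [htail]
      _ ≤ C + ε / 4 * b n := by nlinarith [hb N]
  have hK : 4 * (C + 1) ≤ ε * b n := by
    have := hN₂ n hN₂n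
    rw [div_le_iff₀ hε] at this
    linarith [this]
  rw [abs_div, abs_of_pos hbn, div_lt_iff₀ hbn]
  nlinarith [hS]

lemma aux_kronecker (a b : ℕ → ℝ) (hb : ∀ n, 0 < b n) (hmono : Monotone b)
    (htop : Tendsto b atTop atTop) (L : ℝ)
    (hconv : Tendsto (fun n => ∑ k ∈ Finset.range n, a k / b k) atTop (nhds L)) :
    Tendsto (fun n => (∑ k ∈ Finset.range (n + 1), a k) / b n) atTop (nhds 0) := by
  set u : ℕ → ℝ := fun n => ∑ k ∈ Finset.range n, a k / b k with hu
  have key : ∀ n, (∑ k ∈ Finset.range (n + 1), a k) =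
      b n * u (n + 1) - ∑ i ∈ Finset.range n, (b (i + 1) - b i) * u (i + 1) := by
    intro n
    induction n with
    | zero =>
        have hbne : b 0 ≠ 0 := (hb 0).ne'
        simp [hu, Finset.sum_range_one]
        field_simp
    | succ n ih =>
        have hu2 : u (n + 2) = u (n + 1) + a (n + 1) / b (n + 1) := by
          rw [hu]; exact Finset.sum_range_succ _ _
        rw [Finset.sum_range_succ, ih, Finset.sum_range_succ, hu2]
        have hbne : b (n + 1) ≠ 0 := (hb (n + 1)).ne'
        field_simp
        ring
  have htel : ∀ m : ℕ, ∑ i ∈ Finset.range m, (b (i + 1) - b i) = b m - b 0 :=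
    fun m => Finset.sum_range_sub b m
  have hsplit : ∀ n, (∑ k ∈ Finset.range (n + 1), a k) / b n
      = (u (n + 1) - L) + L * b 0 / b n
        - (∑ i ∈ Finset.range n, (b (i + 1) - b i) * (u (i + 1) - L)) / b n := by
    intro n
    have hbne : b n ≠ 0 := (hb n).ne'
    have hE : ∑ i ∈ Finset.range n, (b (i + 1) - b i) * u (i + 1)
        = L * (b n - b 0) + ∑ i ∈ Finset.range n, (b (i + 1) - b i) * (u (i + 1) - L) := by
      have h : ∀ i, (b (i + 1) - b i) * u (i + 1)
          = (b (i + 1) - b i) * L + (b (i + 1) - b i) * (u (i + 1) - L) := by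
        intro i; ring
      rw [Finset.sum_congr rfl fun i _ => h i, Finset.sum_add_distrib, ← Finset.sum_mul,
        htel n]
      ring
    rw [key n, hE]
    field_simp
    ring
  have h1 : Tendsto (fun n => u (n + 1) - L) atTop (nhds 0) := by
    have h : Tendsto (fun n => u (n + 1)) atTop (nhds L) :=
      hconv.comp (tendsto_add_atTop_nat 1)
    simpa using h.sub (tendsto_const_nhds (x := L))
  have hinv : Tendsto (fun n => (b n)⁻¹) atTop (nhds 0) := htop.inv_tendsto_atTop
  have h2 : Tendsto (fun n => L * b 0 / b n) atTop (nhds 0) := by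
    have h := hinv.const_mul (L * b 0)
    simpa [div_eq_mul_inv] using h
  have h3 : Tendsto (fun n =>
      (∑ i ∈ Finset.range n, (b (i + 1) - b i) * (u (i + 1) - L)) / b n) atTop (nhds 0) :=
    aux_weighted b (fun n => u n - L) hb hmono htop
      (by simpa using hconv.sub (tendsto_const_nhds (x := L)))
  have h4 := (h1.add h2).sub h3
  rw [show (0:ℝ) + 0 - 0 = 0 by ring] at h4
  exact h4.congr fun n => (hsplit n).symm

end Aux

theorem stmt_12 {Ω : Type*} {m0 : MeasurableSpace Ω} (μ : Measure Ω) [IsProbabilityMeasure μ]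
    (ℱ : Filtration ℕ m0) (X : ℕ → Ω → ℝ)
    (hadapted : ∀ n, StronglyMeasurable[ℱ (n + 1)] (X (n + 1)))
    (hL2 : ∀ n, MemLp (X (n + 1)) 2 μ)
    (hmean : ∀ n, μ[X (n + 1) | ℱ n] =ᵐ[μ] 0)
    (v : ℕ → Ω → ℝ) (hvpos : ∀ n ω, 0 < v (n + 1) ω)
    (hv : ∀ n, v (n + 1) =ᵐ[μ] μ[fun ω => (X (n + 1) ω) ^ 2 | ℱ n])
    (g : ℝ → ℝ) (hgpos : ∀ x, 0 ≤ x → 0 < g x)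
    (hgmono : MonotoneOn g (Set.Ici 0))
    (hgtop : Tendsto g atTop atTop)
    (hgint : IntegrableOn (fun x => 1 / g x) (Set.Ici 0)) :
    ∀ᵐ ω ∂μ,
      Tendsto (fun n => ∑ k ∈ Finset.range (n + 1), v (k + 1) ω) atTop atTop →
      Tendsto (fun n => (∑ k ∈ Finset.range (n + 1), X (k + 1) ω) /
        Real.sqrt (g (∑ k ∈ Finset.range (n + 1), v (k + 1) ω))) atTop (nhds 0) := by
  -- basic facts about g
  set G : ℝ → ℝ := fun x => g (max x 0) with hGdef
  have hGg : ∀ x, 0 ≤ x → G x = g x := fun x hx => by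
    simp only [hGdef, max_eq_left hx]
  have hGmono : Monotone G := fun x y hxy =>
    hgmono (Set.mem_Ici.2 (le_max_right x 0)) (Set.mem_Ici.2 (le_max_right y 0))
      (max_le_max hxy le_rfl)
  have hGmeas : Measurable G := hGmono.measurable
  have hGpos : ∀ x, 0 < G x := fun x => hgpos _ (le_max_right x 0)
  have hGge : ∀ x, g 0 ≤ G x := fun x =>
    hgmono (Set.mem_Ici.2 le_rfl) (Set.mem_Ici.2 (le_max_right x 0)) (le_max_right x 0)
  have hg00 : 0 < g 0 := hgpos 0 le_rfl
  -- conditional variances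
  set w : ℕ → Ω → ℝ := fun n ω => max ((μ[fun ω' => (X (n + 1) ω') ^ 2 | ℱ n]) ω) 0 with hwdef
  have hw_meas : ∀ n, StronglyMeasurable[ℱ n] (w n) := fun n =>
    ((stronglyMeasurable_condExp.measurable.max (measurable_const (a := (0:ℝ))))).stronglyMeasurable
  have hw_nonneg : ∀ n ω, 0 ≤ w n ω := fun n ω => le_max_right _ _
  have hw_int : ∀ n, Integrable (w n) μ := fun n => integrable_condExp.pos_part
  have hw_eqv : ∀ n, w n =ᵐ[μ] v (n + 1) := by
    intro n
    filter_upwards [hv n] with ω hω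
    simp only [hwdef, ← hω]
    exact max_eq_left (hvpos n ω).le
  have hw_eqce : ∀ n, w n =ᵐ[μ] μ[fun ω' => (X (n + 1) ω') ^ 2 | ℱ n] := fun n =>
    (hw_eqv n).trans (hv n)
  -- partial sums of conditional variances
  set A : ℕ → Ω → ℝ := fun n ω => ∑ k ∈ Finset.range n, w k ω with hAdef
  have hA_meas : ∀ n, StronglyMeasurable[ℱ n] (A (n + 1)) := by
    intro n
    refine Finset.stronglyMeasurable_fun_sum _ fun k hk => ?_
    exact (hw_meas k).mono (ℱ.mono (Nat.lt_succ_iff.1 (Finset.mem_range.1 hk)))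
  have hA_nonneg : ∀ n ω, 0 ≤ A n ω := fun n ω =>
    Finset.sum_nonneg fun k _ => hw_nonneg k ω
  have hA_succ : ∀ n ω, A (n + 1) ω = A n ω + w n ω := fun n ω =>
    Finset.sum_range_succ _ _
  have hA_le : ∀ n ω, A n ω ≤ A (n + 1) ω := fun n ω => by
    rw [hA_succ]; exact le_add_of_nonneg_right (hw_nonneg n ω)
  -- the normalizing weights
  set c : ℕ → Ω → ℝ := fun n ω => (Real.sqrt (G (A (n + 1) ω)))⁻¹ with hcdef
  set K : ℝ := (Real.sqrt (g 0))⁻¹ with hKdef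
  have hsg0 : 0 < Real.sqrt (g 0) := Real.sqrt_pos.2 hg00
  have hc_pos : ∀ n ω, 0 < c n ω := fun n ω =>
    inv_pos.2 (Real.sqrt_pos.2 (hGpos _))
  have hc_le : ∀ n ω, c n ω ≤ K := by
    intro n ω
    have h := Real.sqrt_le_sqrt (hGge (A (n + 1) ω))
    exact inv_anti₀ hsg0 h
  have hc_norm : ∀ n ω, ‖c n ω‖ ≤ K := fun n ω => by
    rw [Real.norm_eq_abs, abs_of_pos (hc_pos n ω)]; exact hc_le n ω
  have hc_meas : ∀ n, StronglyMeasurable[ℱ n] (c n) :=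
    fun n => (((hGmeas.comp (hA_meas n).measurable).sqrt).inv).stronglyMeasurable
  have hc2_meas : ∀ n, StronglyMeasurable[ℱ n] (fun ω => (c n ω) ^ 2) :=
    fun n => (hc_meas n).pow 2
  have hc2_norm : ∀ n ω, ‖(c n ω) ^ 2‖ ≤ K ^ 2 := by
    intro n ω
    rw [Real.norm_eq_abs, abs_of_nonneg (sq_nonneg _)]
    exact pow_le_pow_left₀ (hc_pos n ω).le (hc_le n ω) 2
  -- the weighted martingale differences
  set Y : ℕ → Ω → ℝ := fun n => c n * X (n + 1) with hYdef
  have hY_meas : ∀ n, StronglyMeasurable[ℱ (n + 1)] (Y n) := fun n =>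
    ((hc_meas n).mono (ℱ.mono n.le_succ)).mul (hadapted n)
  have hX_int : ∀ n, Integrable (X (n + 1)) μ := fun n => (hL2 n).integrable one_le_two
  have hY_L2 : ∀ n, MemLp (Y n) 2 μ := by
    intro n
    refine MemLp.of_le_mul (c := K) (hL2 n)
      ((hY_meas n).mono (ℱ.le (n + 1))).aestronglyMeasurable
      (ae_of_all _ fun ω => ?_)
    simp only [hYdef, Pi.mul_apply, norm_mul]
    exact mul_le_mul_of_nonneg_right (hc_norm n ω) (norm_nonneg _)
  have hY_int : ∀ n, Integrable (Y n) μ := fun n => (hY_L2 n).integrable one_le_two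
  -- the martingale
  set M : ℕ → Ω → ℝ := fun n ω => ∑ k ∈ Finset.range n, Y k ω with hMdef
  have hM_adapted : StronglyAdapted ℱ M := by
    intro n
    refine Finset.stronglyMeasurable_fun_sum _ fun k hk => ?_
    exact (hY_meas k).mono (ℱ.mono (Finset.mem_range.1 hk))
  have hM_int : ∀ n, Integrable (M n) μ := fun n =>
    integrable_finset_sum _ fun k _ => hY_int k
  have hM_L2 : ∀ n, MemLp (M n) 2 μ := fun n =>
    memLp_finsetSum _ fun k _ => hY_L2 k
  have hMnext : ∀ n, M (n + 1) = M n + Y n := by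
    intro n; funext ω
    simp only [hMdef, Pi.add_apply, Finset.sum_range_succ]
  have hmart : Martingale M ℱ μ := by
    refine martingale_nat hM_adapted hM_int fun n => ?_
    have h1 : μ[M (n + 1)|ℱ n] =ᵐ[μ] μ[M n|ℱ n] + μ[Y n|ℱ n] := by
      rw [hMnext n]; exact condExp_add (hM_int n) (hY_int n) _
    have h2 : μ[M n|ℱ n] = M n :=
      condExp_of_stronglyMeasurable (ℱ.le n) (hM_adapted n) (hM_int n)
    have h3 : μ[Y n|ℱ n] =ᵐ[μ] 0 := by
      have hp := condExp_stronglyMeasurable_mul_of_bound (ℱ.le n) (hc_meas n) (hX_int n) K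
        (ae_of_all _ fun ω => hc_norm n ω)
      refine (hp : μ[Y n|ℱ n] =ᵐ[μ] _).trans ?_
      filter_upwards [hmean n] with ω hω
      simp only [Pi.mul_apply, Pi.zero_apply] at hω ⊢
      rw [hω, mul_zero]
    refine EventuallyEq.symm (h1.trans ?_)
    rw [h2]
    filter_upwards [h3] with ω hω
    simp [hω]
  -- integrability of products
  have hprod : ∀ i j, Integrable (Y i * Y j) μ := by
    intro i j
    have hsum : Integrable (fun ω => (Y i ω) ^ 2 + (Y j ω) ^ 2) μ :=
      ((hY_L2 i).integrable_sq).add ((hY_L2 j).integrable_sq)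
    refine hsum.mono'
      (((hY_L2 i).aestronglyMeasurable).mul ((hY_L2 j).aestronglyMeasurable))
      (ae_of_all _ fun ω => ?_)
    simp only [Pi.mul_apply, Real.norm_eq_abs, abs_mul]
    nlinarith [sq_nonneg (|Y i ω| - |Y j ω|), sq_abs (Y i ω), sq_abs (Y j ω),
      abs_nonneg (Y i ω), abs_nonneg (Y j ω)]
  -- orthogonality of increments
  have horth : ∀ i j, i < j → ∫ ω, (Y i * Y j) ω ∂μ = 0 := by
    intro i j hij
    have hZmeas : StronglyMeasurable[ℱ j] (Y i * c j) :=
      ((hY_meas i).mono (ℱ.mono hij)).mul (hc_meas j)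
    have hfg : (Y i * c j) * X (j + 1) = Y i * Y j := by
      funext ω; simp only [hYdef, Pi.mul_apply]; ring
    have hint2 : Integrable ((Y i * c j) * X (j + 1)) μ := by
      rw [hfg]; exact hprod i j
    have hp := condExp_mul_of_stronglyMeasurable_left hZmeas hint2 (hX_int j)
    calc ∫ ω, (Y i * Y j) ω ∂μ
        = ∫ ω, ((Y i * c j) * X (j + 1)) ω ∂μ := by rw [hfg]
      _ = ∫ ω, (μ[(Y i * c j) * X (j + 1)|ℱ j]) ω ∂μ :=
          (integral_condExp (ℱ.le j)).symm
      _ = ∫ ω, ((Y i * c j) * μ[X (j + 1)|ℱ j]) ω ∂μ := integral_congr_ae hp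
      _ = 0 := by
          have hz : (Y i * c j) * μ[X (j + 1)|ℱ j] =ᵐ[μ] 0 := by
            filter_upwards [hmean j] with ω hω
            simp only [Pi.mul_apply, Pi.zero_apply] at hω ⊢
            rw [hω, mul_zero]
          rw [integral_congr_ae hz]
          simp
  -- second moment identity
  have hE2 : ∀ n, ∫ ω, (M n ω) ^ 2 ∂μ = ∑ k ∈ Finset.range n, ∫ ω, (Y k ω) ^ 2 ∂μ := by
    intro n
    have hexp : ∀ ω, (M n ω) ^ 2
        = ∑ i ∈ Finset.range n, ∑ j ∈ Finset.range n, (Y i * Y j) ω := by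
      intro ω
      simp only [hMdef, Pi.mul_apply, sq, Finset.sum_mul_sum]
    calc ∫ ω, (M n ω) ^ 2 ∂μ
        = ∫ ω, ∑ i ∈ Finset.range n, ∑ j ∈ Finset.range n, (Y i * Y j) ω ∂μ :=
          integral_congr_ae (ae_of_all _ hexp)
      _ = ∑ i ∈ Finset.range n, ∑ j ∈ Finset.range n, ∫ ω, (Y i * Y j) ω ∂μ := by
          rw [integral_finset_sum _ fun i _ =>
            integrable_finset_sum _ fun j _ => hprod i j]
          exact Finset.sum_congr rfl fun i _ =>
            integral_finset_sum _ fun j _ => hprod i j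
      _ = ∑ k ∈ Finset.range n, ∫ ω, (Y k ω) ^ 2 ∂μ := by
          refine Finset.sum_congr rfl fun i hi => ?_
          rw [Finset.sum_eq_single_of_mem i hi]
          · refine integral_congr_ae (ae_of_all _ fun ω => ?_)
            simp only [Pi.mul_apply, sq]
          · intro j hj hne
            rcases hne.lt_or_gt with h | h
            · rw [mul_comm]; exact horth j i h
            · exact horth i j h
  -- rewriting second moments via conditional variances
  have hYsq : ∀ k, ∫ ω, (Y k ω) ^ 2 ∂μ = ∫ ω, (c k ω) ^ 2 * w k ω ∂μ := by
    intro k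
    have hsqf : (fun ω => (Y k ω) ^ 2)
        = (fun ω => (c k ω) ^ 2) * fun ω => (X (k + 1) ω) ^ 2 := by
      funext ω; simp only [hYdef, Pi.mul_apply]; ring
    have hXsq_int : Integrable (fun ω => (X (k + 1) ω) ^ 2) μ := (hL2 k).integrable_sq
    have hYsq_int : Integrable (fun ω => (Y k ω) ^ 2) μ := (hY_L2 k).integrable_sq
    have hint2 : Integrable ((fun ω => (c k ω) ^ 2) * fun ω => (X (k + 1) ω) ^ 2) μ := by
      rw [← hsqf]; exact hYsq_int
    have hp := condExp_stronglyMeasurable_mul_of_bound (ℱ.le k) (hc2_meas k) hXsq_int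
      (K ^ 2) (ae_of_all _ fun ω => hc2_norm k ω)
    calc ∫ ω, (Y k ω) ^ 2 ∂μ
        = ∫ ω, ((fun ω => (c k ω) ^ 2) * fun ω => (X (k + 1) ω) ^ 2) ω ∂μ := by
          rw [← hsqf]
      _ = ∫ ω, (μ[(fun ω => (c k ω) ^ 2) * fun ω => (X (k + 1) ω) ^ 2|ℱ k]) ω ∂μ :=
          (integral_condExp (ℱ.le k)).symm
      _ = ∫ ω, (c k ω) ^ 2 * w k ω ∂μ := by
          refine integral_congr_ae (hp.trans ?_)
          filter_upwards [hw_eqce k] with ω hω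
          simp only [Pi.mul_apply]
          rw [← hω]
  -- the key L² bound
  set Cg : ℝ := ∫ x in Set.Ici (0:ℝ), 1 / g x with hCgdef
  have h1g_nonneg : ∀ x ∈ Set.Ici (0:ℝ), 0 ≤ 1 / g x := fun x hx =>
    (one_div_nonneg).2 (hgpos x hx).le
  have hsum_int : ∀ k, Integrable (fun ω => (c k ω) ^ 2 * w k ω) μ := fun k =>
    (hw_int k).bdd_mul (((hc2_meas k).mono (ℱ.le k)).aestronglyMeasurable)
      (ae_of_all _ fun ω => hc2_norm k ω)
  have hpt : ∀ ω n, ∑ k ∈ Finset.range n, (c k ω) ^ 2 * w k ω ≤ Cg := by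
    intro ω n
    have hA0 : A 0 ω = 0 := by simp [hAdef]
    have hiint : ∀ k, IntervalIntegrable (fun x => 1 / g x) volume (A k ω) (A (k + 1) ω) := by
      intro k
      refine (hgint.mono_set ?_).intervalIntegrable
      rw [Set.uIcc_of_le (hA_le k ω)]
      exact fun x hx => le_trans (hA_nonneg k ω) hx.1
    have hterm : ∀ k, (c k ω) ^ 2 * w k ω ≤ ∫ x in (A k ω)..(A (k + 1) ω), 1 / g x := by
      intro k
      have hgA : 0 < G (A (k + 1) ω) := hGpos _
      have hc2 : (c k ω) ^ 2 = (G (A (k + 1) ω))⁻¹ := by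
        rw [hcdef, inv_pow, Real.sq_sqrt hgA.le]
      have hle : ∀ x ∈ Set.Icc (A k ω) (A (k + 1) ω),
          (G (A (k + 1) ω))⁻¹ ≤ 1 / g x := by
        intro x hx
        have hx0 : 0 ≤ x := le_trans (hA_nonneg k ω) hx.1
        have hgx : 0 < g x := hgpos x hx0
        have hgle : g x ≤ G (A (k + 1) ω) := by
          rw [hGg _ (hA_nonneg (k + 1) ω)]
          exact hgmono (Set.mem_Ici.2 hx0) (Set.mem_Ici.2 (hA_nonneg (k + 1) ω)) hx.2
        rw [one_div]
        exact inv_anti₀ hgx hgle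
      calc (c k ω) ^ 2 * w k ω
          = (A (k + 1) ω - A k ω) * (G (A (k + 1) ω))⁻¹ := by
            rw [hc2, hA_succ k ω]; ring
        _ = ∫ _x in (A k ω)..(A (k + 1) ω), (G (A (k + 1) ω))⁻¹ := by
            rw [intervalIntegral.integral_const, smul_eq_mul]
        _ ≤ ∫ x in (A k ω)..(A (k + 1) ω), 1 / g x :=
            intervalIntegral.integral_mono_on (hA_le k ω) intervalIntegrable_const
              (hiint k) hle
    calc ∑ k ∈ Finset.range n, (c k ω) ^ 2 * w k ω
        ≤ ∑ k ∈ Finset.range n, ∫ x in (A k ω)..(A (k + 1) ω), 1 / g x :=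
          Finset.sum_le_sum fun k _ => hterm k
      _ = ∫ x in (A 0 ω)..(A n ω), 1 / g x :=
          intervalIntegral.sum_integral_adjacent_intervals fun k _ => hiint k
      _ ≤ Cg := by
          rw [hA0, intervalIntegral.integral_of_le (hA_nonneg n ω)]
          refine setIntegral_mono_set hgint ?_ ?_
          · exact (ae_restrict_iff' measurableSet_Ici).2 (ae_of_all _ h1g_nonneg)
          · exact HasSubset.Subset.eventuallyLE fun x hx => le_of_lt hx.1
  have hbound2 : ∀ n, ∫ ω, (M n ω) ^ 2 ∂μ ≤ Cg := by
    intro n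
    rw [hE2 n]
    calc ∑ k ∈ Finset.range n, ∫ ω, (Y k ω) ^ 2 ∂μ
        = ∑ k ∈ Finset.range n, ∫ ω, (c k ω) ^ 2 * w k ω ∂μ :=
          Finset.sum_congr rfl fun k _ => hYsq k
      _ = ∫ ω, ∑ k ∈ Finset.range n, (c k ω) ^ 2 * w k ω ∂μ :=
          (integral_finset_sum _ fun k _ => hsum_int k).symm
      _ ≤ ∫ _ω, Cg ∂μ :=
          integral_mono (integrable_finset_sum _ fun k _ => hsum_int k)
            (integrable_const _) (fun ω => hpt ω n)
      _ = Cg := by simp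
  -- uniform L¹ bound
  set R : NNReal := (Real.sqrt (Cg + 1)).toNNReal with hRdef
  have hbdd : ∀ n, eLpNorm (M n) 1 μ ≤ (R : ENNReal) := by
    intro n
    have hMint := hM_int n
    have h1 : eLpNorm (M n) 1 μ = ENNReal.ofReal (∫ ω, ‖M n ω‖ ∂μ) := by
      rw [eLpNorm_one_eq_lintegral_enorm, ← ofReal_integral_norm_eq_lintegral_enorm hMint]
    have hconj : (2:ℝ).HolderConjugate 2 := ⟨by norm_num, by norm_num, by norm_num⟩
    have hmlp : MemLp (M n) (ENNReal.ofReal 2) μ := by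
      convert hM_L2 n using 2
      norm_num
    have hone : MemLp (fun _ : Ω => (1:ℝ)) (ENNReal.ofReal 2) μ := memLp_const 1
    have hH2 := integral_mul_norm_le_Lp_mul_Lq hconj hmlp hone
    simp only [norm_one, mul_one, Real.one_rpow, integral_const, measure_univ, probReal_univ,
      ENNReal.toReal_one, one_smul, Real.rpow_natCast] at hH2
    have hnorm2 : ∫ ω, ‖M n ω‖ ^ (2:ℝ) ∂μ = ∫ ω, (M n ω) ^ 2 ∂μ := by
      refine integral_congr_ae (ae_of_all _ fun ω => ?_)
      show ‖M n ω‖ ^ (2:ℝ) = (M n ω) ^ 2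
      have hrp : ‖M n ω‖ ^ (2:ℝ) = ‖M n ω‖ ^ (2:ℕ) := by
        rw [← Real.rpow_natCast ‖M n ω‖ 2]; norm_num
      rw [hrp]
      simp [Real.norm_eq_abs, sq_abs]
    have hH3 : ∫ ω, ‖M n ω‖ ∂μ ≤ (Cg + 1) ^ ((1:ℝ)/2) := by
      have hb2 : ∫ ω, ‖M n ω‖ ^ (2:ℝ) ∂μ ≤ Cg + 1 := by
        rw [hnorm2]; linarith [hbound2 n]
      have hnn : 0 ≤ ∫ ω, ‖M n ω‖ ^ (2:ℝ) ∂μ := by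
        refine integral_nonneg fun ω => ?_
        positivity
      calc ∫ ω, ‖M n ω‖ ∂μ ≤ (∫ ω, ‖M n ω‖ ^ (2:ℝ) ∂μ) ^ ((1:ℝ)/2) := hH2
        _ ≤ (Cg + 1) ^ ((1:ℝ)/2) := Real.rpow_le_rpow hnn hb2 (by norm_num)
    rw [h1, hRdef]
    have : ((Real.sqrt (Cg + 1)).toNNReal : ENNReal) = ENNReal.ofReal (Real.sqrt (Cg + 1)) := rfl
    rw [this]
    refine ENNReal.ofReal_le_ofReal ?_
    rwa [Real.sqrt_eq_rpow]
  -- a.s. convergence of the martingale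
  have hae : ∀ᵐ ω ∂μ, ∃ L, Tendsto (fun n => M n ω) atTop (nhds L) :=
    hmart.submartingale.exists_ae_tendsto_of_bdd hbdd
  -- conclusion
  filter_upwards [hae, ae_all_iff.2 hw_eqv] with ω hMconv hwv htopv
  obtain ⟨L, hL⟩ := hMconv
  have hAv : ∀ n, A (n + 1) ω = ∑ k ∈ Finset.range (n + 1), v (k + 1) ω := by
    intro n
    exact Finset.sum_congr rfl fun k _ => hwv k
  set b : ℕ → ℝ := fun n => Real.sqrt (G (A (n + 1) ω)) with hbdef
  have hb_pos : ∀ n, 0 < b n := fun n => Real.sqrt_pos.2 (hGpos _)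
  have hb_mono : Monotone b := by
    apply monotone_nat_of_le_succ
    intro n
    exact Real.sqrt_le_sqrt (hGmono (hA_le (n + 1) ω))
  have htopA : Tendsto (fun n => A (n + 1) ω) atTop atTop := by
    refine htopv.congr fun n => (hAv n).symm
  have hGA : Tendsto (fun n => G (A (n + 1) ω)) atTop atTop := by
    refine (hgtop.comp htopA).congr fun n => ?_
    simp only [Function.comp_apply]
    rw [hGg _ (hA_nonneg (n + 1) ω)]
  have hb_top : Tendsto b atTop atTop := aux_sqrt_atTop.comp hGA
  have hM_eq : ∀ n, M n ω = ∑ k ∈ Finset.range n, X (k + 1) ω / b k := by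
    intro n
    refine Finset.sum_congr rfl fun k _ => ?_
    simp only [hYdef, Pi.mul_apply, hcdef, hbdef]
    rw [div_eq_mul_inv, mul_comm]
  have hkron := aux_kronecker (fun k => X (k + 1) ω) b hb_pos hb_mono hb_top L
    (hL.congr fun n => hM_eq n)
  refine hkron.congr fun n => ?_
  have hbn : b n = Real.sqrt (g (∑ k ∈ Finset.range (n + 1), v (k + 1) ω)) := by
    show Real.sqrt (G (A (n + 1) ω)) = _
    rw [hGg _ (hA_nonneg (n + 1) ω), hAv n]
  rw [hbn]
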